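/- Let f : X → {0,1} be any fixed classifier, ε ∈ (0, 0.5), λ ∈ (0, 0.5), and suppose min_{i∈{0,1}} Pr_D[f=1, Z=i] ≥ λ/2. Then with probability at least 1 − 4·exp(−ε²(1−η_0−η_1)²λ²N/2400) over the flipping noise, the denoised rates Γ_0(f) and Γ_1(f) are well-defined and positive and (1−ε)·γ(f,S) ≤ γ^Δ(f,Ŝ) ≤ (1+ε)·γ(f,S). -/

import Mathlib

open scoped Classical

noncomputable section

/-- Empirical frequency of a predicate over `N` samples. -/
def empFreq (N : ℕ) (P : Fin N → Prop) : ℝ :=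
  ((Finset.univ.filter P).card : ℝ) / N

/-- Probability, over independent flipping noise with rates `η0, η1`, of an event on the
noisy binary protected attributes. -/
def noiseProb (N : ℕ) (z : Fin N → Bool) (η0 η1 : ℝ)
    (E : (Fin N → Bool) → Prop) : ℝ :=
  ∑ zh : Fin N → Bool,
    if E zh then
      ∏ a, (if zh a = z a then 1 - cond (z a) η1 η0 else cond (z a) η1 η0)
    else 0

/-- `Pr[f = 1, Z' = i]` for the attribute assignment `z'` (true or noisy). -/
def prJoint {X : Type} (N : ℕ) (x : Fin N → X) (f : X → Bool)
    (z' : Fin N → Bool) (i : Bool) : ℝ :=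
  empFreq N (fun a => f (x a) = true ∧ z' a = i)

/-- `Pr[Z' = i]` for the attribute assignment `z'`. -/
def muOf (N : ℕ) (z' : Fin N → Bool) (i : Bool) : ℝ :=
  empFreq N (fun a => z' a = i)

/-- `Pr[f = 1 ∣ Z' = i]`. -/
def rate {X : Type} (N : ℕ) (x : Fin N → X) (f : X → Bool)
    (z' : Fin N → Bool) (i : Bool) : ℝ :=
  prJoint N x f z' i / muOf N z' i

/-- Statistical rate `γ(f, ·)` with respect to attribute assignment `z'`. -/
def gammaSR {X : Type} (N : ℕ) (x : Fin N → X) (f : X → Bool)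
    (z' : Fin N → Bool) : ℝ :=
  min (rate N x f z' false) (rate N x f z' true) /
    max (rate N x f z' false) (rate N x f z' true)

/-- Denoised rate `Γ_0(f)`. -/
def Gamma0 {X : Type} (N : ℕ) (x : Fin N → X) (η0 η1 : ℝ) (f : X → Bool)
    (zh : Fin N → Bool) : ℝ :=
  ((1 - η1) * prJoint N x f zh false - η1 * prJoint N x f zh true) /
    ((1 - η1) * muOf N zh false - η1 * muOf N zh true)

/-- Denoised rate `Γ_1(f)`. -/
def Gamma1 {X : Type} (N : ℕ) (x : Fin N → X) (η0 η1 : ℝ) (f : X → Bool)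
    (zh : Fin N → Bool) : ℝ :=
  ((1 - η0) * prJoint N x f zh true - η0 * prJoint N x f zh false) /
    ((1 - η0) * muOf N zh true - η0 * muOf N zh false)

/-- Denoised statistical rate `γ^Δ(f, Ŝ)`. -/
def gammaDelta {X : Type} (N : ℕ) (x : Fin N → X) (η0 η1 : ℝ) (f : X → Bool)
    (zh : Fin N → Bool) : ℝ :=
  min (Gamma0 N x η0 η1 f zh / Gamma1 N x η0 η1 f zh)
    (Gamma1 N x η0 η1 f zh / Gamma0 N x η0 η1 f zh)

section Aux
open Finset Real
def wgt {N : ℕ} (z : Fin N → Bool) (η0 η1 : ℝ) (a : Fin N) (b : Bool) : ℝ :=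
  if b = z a then 1 - cond (z a) η1 η0 else cond (z a) η1 η0

def noiseProbAux (N : ℕ) (z : Fin N → Bool) (η0 η1 : ℝ)
    (E : (Fin N → Bool) → Prop) : ℝ :=
  ∑ zh : Fin N → Bool, if E zh then ∏ a, wgt z η0 η1 a (zh a) else 0

variable {N : ℕ} {z : Fin N → Bool} {η0 η1 : ℝ}

lemma wgt_nonneg (h0 : 0 ≤ η0) (h1 : η0 ≤ 1) (h2 : 0 ≤ η1) (h3 : η1 ≤ 1)
    (a : Fin N) (b : Bool) : 0 ≤ wgt z η0 η1 a b := by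
  unfold wgt
  cases z a <;> simp <;> split <;> simp_all <;> linarith

lemma wgt_sum (a : Fin N) : wgt z η0 η1 a false + wgt z η0 η1 a true = 1 := by
  unfold wgt; cases z a <;> simp

lemma wgt_true (a : Fin N) : wgt z η0 η1 a true = if z a then 1 - η1 else η0 := by
  unfold wgt; cases z a <;> simp

lemma sum_prod_eq (g : ∀ _ : Fin N, Bool → ℝ) :
    ∑ zh : Fin N → Bool, ∏ a, g a (zh a) = ∏ a, (g a false + g a true) := by
  rw [← Fintype.prod_sum]
  congr 1; ext a; rw [Fintype.sum_bool]; ring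

lemma prod_wgt_nonneg (h0 : 0 ≤ η0) (h1 : η0 ≤ 1) (h2 : 0 ≤ η1) (h3 : η1 ≤ 1)
    (zh : Fin N → Bool) : 0 ≤ ∏ a, wgt z η0 η1 a (zh a) :=
  Finset.prod_nonneg fun a _ => wgt_nonneg h0 h1 h2 h3 a _

lemma noiseProbAux_total :
    noiseProbAux N z η0 η1 (fun _ => True) = 1 := by
  unfold noiseProbAux
  simp only [if_pos trivial]
  rw [sum_prod_eq]
  simp [wgt_sum]

lemma noiseProbAux_mono (h0 : 0 ≤ η0) (h1 : η0 ≤ 1) (h2 : 0 ≤ η1) (h3 : η1 ≤ 1)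
    {E F : (Fin N → Bool) → Prop} (h : ∀ zh, E zh → F zh) :
    noiseProbAux N z η0 η1 E ≤ noiseProbAux N z η0 η1 F := by
  apply Finset.sum_le_sum
  intro zh _
  by_cases hE : E zh
  · rw [if_pos hE, if_pos (h zh hE)]
  · rw [if_neg hE]
    split
    · exact prod_wgt_nonneg h0 h1 h2 h3 zh
    · exact le_refl 0
      
lemma noiseProbAux_add_compl (E : (Fin N → Bool) → Prop) :
    noiseProbAux N z η0 η1 E + noiseProbAux N z η0 η1 (fun zh => ¬ E zh) = 1 := by
  unfold noiseProbAux
  rw [← Finset.sum_add_distrib, ← noiseProbAux_total (z := z) (η0 := η0) (η1 := η1)]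
  unfold noiseProbAux
  apply Finset.sum_congr rfl
  intro zh _
  by_cases hE : E zh <;> simp [hE]

lemma noiseProbAux_or_le (h0 : 0 ≤ η0) (h1 : η0 ≤ 1) (h2 : 0 ≤ η1) (h3 : η1 ≤ 1)
    (E F : (Fin N → Bool) → Prop) :
    noiseProbAux N z η0 η1 (fun zh => E zh ∨ F zh) ≤
      noiseProbAux N z η0 η1 E + noiseProbAux N z η0 η1 F := by
  unfold noiseProbAux
  rw [← Finset.sum_add_distrib]
  apply Finset.sum_le_sum
  intro zh _
  have hw := prod_wgt_nonneg (z := z) h0 h1 h2 h3 zh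
  by_cases hE : E zh <;> by_cases hF : F zh <;> simp [hE, hF] <;> linarith

lemma exp_quad {u : ℝ} (h : |u| ≤ 1) : Real.exp u ≤ 1 + u + (3/4) * u^2 := by
  have hb := (abs_le.mp (Real.exp_bound h (n := 2) (by norm_num))).2
  have hs : ∑ m ∈ Finset.range 2, u ^ m / (m.factorial : ℝ) = 1 + u := by
    simp [Finset.sum_range_succ]
  rw [hs] at hb
  norm_num [Nat.factorial, sq_abs] at hb
  linarith

lemma step_bound {q c t : ℝ} (hq : 0 ≤ q) (hq1 : q ≤ 1) (hc : |c| ≤ 1) (ht : |t| ≤ 1) :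
    (1 - q) * Real.exp (t * (c * (-q))) + q * Real.exp (t * (c * (1 - q))) ≤
      Real.exp (3/4 * t^2) := by
  have hu0 : |t * (c * (-q))| ≤ 1 := by
    rw [abs_mul, abs_mul, abs_neg, abs_of_nonneg hq]
    have h1' : |c| * q ≤ 1 := mul_le_one₀ hc hq hq1
    exact mul_le_one₀ ht (mul_nonneg (abs_nonneg c) hq) h1'
  have hu1 : |t * (c * (1 - q))| ≤ 1 := by
    rw [abs_mul, abs_mul, abs_of_nonneg (by linarith : (0:ℝ) ≤ 1 - q)]
    have h1' : |c| * (1 - q) ≤ 1 := mul_le_one₀ hc (by linarith) (by linarith)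
    exact mul_le_one₀ ht (mul_nonneg (abs_nonneg c) (by linarith)) h1'
  have e0 := exp_quad hu0
  have e1 := exp_quad hu1
  have key : (1 - q) * (1 + t * (c * (-q)) + 3/4 * (t * (c * (-q)))^2)
      + q * (1 + t * (c * (1 - q)) + 3/4 * (t * (c * (1 - q)))^2)
      ≤ 1 + 3/4 * t^2 := by
    have hc1 : c^2 ≤ 1 := by nlinarith [sq_abs c, abs_nonneg c]
    have ht1 : t^2 ≤ 1 := by nlinarith [sq_abs t, abs_nonneg t]
    nlinarith [mul_nonneg hq (sub_nonneg.2 hq1), sq_nonneg t, sq_nonneg c,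
      mul_nonneg (sq_nonneg t) (sq_nonneg c),
      mul_nonneg (mul_nonneg (sq_nonneg t) (sq_nonneg c)) (mul_nonneg hq (sub_nonneg.2 hq1))]
  have A : (1 - q) * Real.exp (t * (c * (-q))) ≤
      (1 - q) * (1 + t * (c * (-q)) + 3/4 * (t * (c * (-q)))^2) :=
    mul_le_mul_of_nonneg_left e0 (by linarith)
  have B : q * Real.exp (t * (c * (1 - q))) ≤
      q * (1 + t * (c * (1 - q)) + 3/4 * (t * (c * (1 - q)))^2) :=
    mul_le_mul_of_nonneg_left e1 hq
  have hexp : 1 + 3/4 * t^2 ≤ Real.exp (3/4 * t^2) := by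
    have := Real.add_one_le_exp (3/4 * t^2); linarith
  linarith

def Tsum {N : ℕ} (c : Fin N → ℝ) (zh : Fin N → Bool) : ℝ := ∑ a, c a * (cond (zh a) 1 0)

def msum {N : ℕ} (z : Fin N → Bool) (η0 η1 : ℝ) (c : Fin N → ℝ) : ℝ :=
  ∑ a, c a * wgt z η0 η1 a true

lemma mgf_bound (h0 : 0 ≤ η0) (h1 : η0 ≤ 1) (h2 : 0 ≤ η1) (h3 : η1 ≤ 1)
    (c : Fin N → ℝ) (hc : ∀ a, |c a| ≤ 1) (t : ℝ) (ht : |t| ≤ 1) :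
    ∑ zh : Fin N → Bool, (∏ a, wgt z η0 η1 a (zh a)) *
        Real.exp (t * (Tsum c zh - msum z η0 η1 c)) ≤ Real.exp (3/4 * t^2 * N) := by
  have hrw : ∀ zh : Fin N → Bool, (∏ a, wgt z η0 η1 a (zh a)) *
      Real.exp (t * (Tsum c zh - msum z η0 η1 c)) =
      ∏ a, (wgt z η0 η1 a (zh a) *
        Real.exp (t * (c a * (cond (zh a) 1 0 - wgt z η0 η1 a true)))) := by
    intro zh
    rw [Finset.prod_mul_distrib, ← Real.exp_sum]
    congr 2
    unfold Tsum msum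
    rw [← Finset.sum_sub_distrib, Finset.mul_sum]
    congr 1; ext a; ring
  simp only [hrw]
  rw [sum_prod_eq (fun a b => wgt z η0 η1 a b *
    Real.exp (t * (c a * ((bif b then (1:ℝ) else 0) - wgt z η0 η1 a true))))]
  have hN : Real.exp (3/4 * t^2 * N) = ∏ _a : Fin N, Real.exp (3/4 * t^2) := by
    rw [Finset.prod_const, ← Real.exp_nat_mul]
    congr 1; simp [Finset.card_univ]; ring
  rw [hN]
  apply Finset.prod_le_prod
  · intro a _
    have := wgt_nonneg (z := z) h0 h1 h2 h3 a false
    have := wgt_nonneg (z := z) h0 h1 h2 h3 a true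
    positivity
  · intro a _
    have hq0 : 0 ≤ wgt z η0 η1 a true := wgt_nonneg h0 h1 h2 h3 a true
    have hq1 : wgt z η0 η1 a true ≤ 1 := by
      have := wgt_nonneg (z := z) h0 h1 h2 h3 a false
      have := wgt_sum (z := z) (η0 := η0) (η1 := η1) a
      linarith
    have hwf : wgt z η0 η1 a false = 1 - wgt z η0 η1 a true := by
      have := wgt_sum (z := z) (η0 := η0) (η1 := η1) a; linarith
    rw [hwf]
    simpa using step_bound hq0 hq1 (hc a) ht

lemma tail_bound (h0 : 0 ≤ η0) (h1 : η0 ≤ 1) (h2 : 0 ≤ η1) (h3 : η1 ≤ 1)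
    (hN : 1 ≤ N) (c : Fin N → ℝ) (hc : ∀ a, |c a| ≤ 1) (r : ℝ) (hr : 0 < r) (hrN : r ≤ N) :
    noiseProbAux N z η0 η1 (fun zh => r ≤ Tsum c zh - msum z η0 η1 c) ≤
      Real.exp (-(r^2) / (3*N)) := by
  have hNpos : (0:ℝ) < N := by exact_mod_cast Nat.lt_of_lt_of_le Nat.zero_lt_one hN
  set t : ℝ := 2*r/(3*N) with hdef
  have htpos : 0 < t := by positivity
  have ht1 : |t| ≤ 1 := by
    rw [abs_of_pos htpos, hdef, div_le_one (by positivity)]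
    linarith
  have step1 : noiseProbAux N z η0 η1 (fun zh => r ≤ Tsum c zh - msum z η0 η1 c) ≤
      ∑ zh : Fin N → Bool, (∏ a, wgt z η0 η1 a (zh a)) *
        Real.exp (t * (Tsum c zh - msum z η0 η1 c) - t * r) := by
    unfold noiseProbAux
    apply Finset.sum_le_sum
    intro zh _
    have hw := prod_wgt_nonneg (z := z) h0 h1 h2 h3 zh
    by_cases hE : r ≤ Tsum c zh - msum z η0 η1 c
    · rw [if_pos hE]
      have : (1:ℝ) ≤ Real.exp (t * (Tsum c zh - msum z η0 η1 c) - t * r) := by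
        rw [← Real.exp_zero]
        apply Real.exp_le_exp.2
        have := mul_le_mul_of_nonneg_left hE (le_of_lt htpos)
        linarith
      nlinarith
    · rw [if_neg hE]
      positivity
  have step2 : ∑ zh : Fin N → Bool, (∏ a, wgt z η0 η1 a (zh a)) *
        Real.exp (t * (Tsum c zh - msum z η0 η1 c) - t * r) ≤
      Real.exp (3/4 * t^2 * N - t * r) := by
    have : ∀ zh : Fin N → Bool, (∏ a, wgt z η0 η1 a (zh a)) *
        Real.exp (t * (Tsum c zh - msum z η0 η1 c) - t * r) =
        ((∏ a, wgt z η0 η1 a (zh a)) *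
          Real.exp (t * (Tsum c zh - msum z η0 η1 c))) * Real.exp (- (t * r)) := by
      intro zh; rw [mul_assoc, ← Real.exp_add]; ring_nf
    simp only [this]
    rw [← Finset.sum_mul]
    have hmgf := mgf_bound (z := z) h0 h1 h2 h3 c hc t ht1
    have hrw : Real.exp (3/4 * t^2 * N - t * r) =
        Real.exp (3/4 * t^2 * N) * Real.exp (-(t * r)) := by
      rw [← Real.exp_add]; ring_nf
    rw [hrw]
    exact mul_le_mul_of_nonneg_right hmgf (Real.exp_nonneg _)
  have hval : 3/4 * t^2 * N - t * r = -(r^2) / (3*N) := by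
    rw [hdef]; field_simp; ring
  calc noiseProbAux N z η0 η1 _ ≤ _ := step1
    _ ≤ _ := step2
    _ = _ := by rw [hval]

def empFreq' (N : ℕ) (P : Fin N → Prop) : ℝ :=
  ((Finset.univ.filter P).card : ℝ) / N

lemma empFreq'_eq (N : ℕ) (P : Fin N → Prop) :
    empFreq' N P = (∑ a, if P a then (1:ℝ) else 0) / N := by
  unfold empFreq'
  rw [Finset.sum_boole]

lemma empFreq'_sumdef {N : ℕ} (hN : (N:ℝ) ≠ 0) (P : Fin N → Prop) :
    (N:ℝ) * empFreq' N P = ∑ a, if P a then (1:ℝ) else 0 := by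
  rw [empFreq'_eq]; field_simp

lemma empFreq'_mono {N : ℕ} (P Q : Fin N → Prop) (h : ∀ a, P a → Q a) :
    empFreq' N P ≤ empFreq' N Q := by
  rw [empFreq'_eq, empFreq'_eq]
  apply div_le_div_of_nonneg_right ?_ (Nat.cast_nonneg N)
  apply Finset.sum_le_sum
  intro a _
  by_cases hP : P a
  · rw [if_pos hP, if_pos (h a hP)]
  · rw [if_neg hP]; split <;> norm_num

-- core algebra lemma
lemma core_ratio (ε ρ a b c d a' b' c' d' : ℝ)
    (hε : 0 < ε) (hε2 : ε < 1/2) (hρ : ρ = ε/14)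
    (ha : 0 < a) (hb : 0 < b) (hc : 0 < c) (hd : 0 < d)
    (h1 : |a' - a| ≤ ρ * a) (h2 : |b' - b| ≤ ρ * b)
    (h3 : |c' - c| ≤ ρ * c) (h4 : |d' - d| ≤ ρ * d) :
    0 < a' ∧ 0 < b' ∧ 0 < c' ∧ 0 < d' ∧
    (1 - ε) * ((a/c)/(b/d)) ≤ (a'/c')/(b'/d') ∧
    (a'/c')/(b'/d') ≤ (1 + ε) * ((a/c)/(b/d)) := by
  have hρ0 : 0 ≤ ρ := by rw [hρ]; linarith
  have hρ1 : ρ < 1/28 := by rw [hρ]; linarith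
  obtain ⟨h1l, h1r⟩ := abs_le.mp h1
  obtain ⟨h2l, h2r⟩ := abs_le.mp h2
  obtain ⟨h3l, h3r⟩ := abs_le.mp h3
  obtain ⟨h4l, h4r⟩ := abs_le.mp h4
  have ha' : 0 < a' := by nlinarith
  have hb' : 0 < b' := by nlinarith
  have hc' : 0 < c' := by nlinarith
  have hd' : 0 < d' := by nlinarith
  have hb0 : b ≠ 0 := hb.ne'
  have hc0 : c ≠ 0 := hc.ne'
  have hd0 : d ≠ 0 := hd.ne'
  have hb0' : b' ≠ 0 := hb'.ne'
  have hc0' : c' ≠ 0 := hc'.ne'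
  have hd0' : d' ≠ 0 := hd'.ne'
  have e1 : (a/c)/(b/d) = (a*d)/(c*b) := by field_simp
  have e2 : (a'/c')/(b'/d') = (a'*d')/(c'*b') := by field_simp
  have hA1 : (1-ρ)*a ≤ a' := by linarith
  have hA2 : a' ≤ (1+ρ)*a := by linarith
  have hB1 : (1-ρ)*b ≤ b' := by linarith
  have hB2 : b' ≤ (1+ρ)*b := by linarith
  have hC1 : (1-ρ)*c ≤ c' := by linarith
  have hC2 : c' ≤ (1+ρ)*c := by linarith
  have hD1 : (1-ρ)*d ≤ d' := by linarith
  have hD2 : d' ≤ (1+ρ)*d := by linarith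
  refine ⟨ha', hb', hc', hd', ?_, ?_⟩
  · rw [e1, e2, mul_div_assoc', div_le_div_iff₀ (by positivity) (by positivity)]
    have p1 : ((1-ρ)*a)*((1-ρ)*d) ≤ a'*d' :=
      mul_le_mul hA1 hD1 (mul_nonneg (by linarith) hd.le) ha'.le
    have p2 : c'*b' ≤ ((1+ρ)*c)*((1+ρ)*b) :=
      mul_le_mul hC2 hB2 hb'.le (mul_nonneg (by linarith) hc.le)
    have poly : (1-ε)*((1+ρ)*(1+ρ)) ≤ (1-ρ)*(1-ρ) := by
      rw [hρ]; clear * - hε hε2; nlinarith [sq_nonneg ε]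
    calc (1-ε)*(a*d)*(c'*b')
        ≤ (1-ε)*(a*d)*(((1+ρ)*c)*((1+ρ)*b)) := by
          exact mul_le_mul_of_nonneg_left p2 (mul_nonneg (by linarith) (mul_pos ha hd).le)
      _ = ((1-ε)*((1+ρ)*(1+ρ))) * ((a*d)*(c*b)) := by ring
      _ ≤ ((1-ρ)*(1-ρ)) * ((a*d)*(c*b)) := by
          apply mul_le_mul_of_nonneg_right poly
          positivity
      _ = (((1-ρ)*a)*((1-ρ)*d))*(c*b) := by ring
      _ ≤ (a'*d')*(c*b) := by
          apply mul_le_mul_of_nonneg_right p1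
          positivity
  · rw [e1, e2, mul_div_assoc', div_le_div_iff₀ (by positivity) (by positivity)]
    have p1 : a'*d' ≤ ((1+ρ)*a)*((1+ρ)*d) :=
      mul_le_mul hA2 hD2 hd'.le (mul_nonneg (by linarith) ha.le)
    have p2 : ((1-ρ)*c)*((1-ρ)*b) ≤ c'*b' :=
      mul_le_mul hC1 hB1 (mul_nonneg (by linarith) hb.le) hc'.le
    have poly : (1+ρ)*(1+ρ) ≤ (1+ε)*((1-ρ)*(1-ρ)) := by
      rw [hρ]; clear * - hε hε2; nlinarith [sq_nonneg ε]
    calc (a'*d')*(c*b)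
        ≤ (((1+ρ)*a)*((1+ρ)*d))*(c*b) := by
          apply mul_le_mul_of_nonneg_right p1
          positivity
      _ = ((1+ρ)*(1+ρ))*((a*d)*(c*b)) := by ring
      _ ≤ ((1+ε)*((1-ρ)*(1-ρ)))*((a*d)*(c*b)) := by
          apply mul_le_mul_of_nonneg_right poly
          positivity
      _ = (1+ε)*(a*d)*(((1-ρ)*c)*((1-ρ)*b)) := by ring
      _ ≤ (1+ε)*(a*d)*(c'*b') := by
          exact mul_le_mul_of_nonneg_left p2 (mul_nonneg (by linarith) (mul_pos ha hd).le)

lemma empFreq_eq' (N : ℕ) (P : Fin N → Prop) : empFreq N P = empFreq' N P := rfl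

section counting
variable {X : Type} {N : ℕ} (x : Fin N → X) (f : X → Bool) (z : Fin N → Bool) (η0 η1 : ℝ)

def cF : Fin N → ℝ := fun a => if f (x a) = true then (1:ℝ) else 0
def cO : Fin N → ℝ := fun _ => (1:ℝ)

lemma cF_abs : ∀ a, |cF x f a| ≤ 1 := by
  intro a; unfold cF; split <;> norm_num

lemma cO_abs : ∀ a : Fin N, |cO (N := N) a| ≤ 1 := by
  intro a; unfold cO; norm_num

lemma Tsum_cF (hN : (N:ℝ) ≠ 0) (zh : Fin N → Bool) :
    Tsum (cF x f) zh = N * prJoint N x f zh true := by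
  unfold prJoint
  rw [empFreq_eq', empFreq'_sumdef hN]
  unfold Tsum cF
  apply Finset.sum_congr rfl
  intro a _
  by_cases hf : f (x a) = true <;> cases hzh : zh a <;> simp [hf, hzh]

lemma Tsum_cO (hN : (N:ℝ) ≠ 0) (zh : Fin N → Bool) :
    Tsum (cO (N := N)) zh = N * muOf N zh true := by
  unfold muOf
  rw [empFreq_eq', empFreq'_sumdef hN]
  unfold Tsum cO
  apply Finset.sum_congr rfl
  intro a _
  cases hzh : zh a <;> simp [hzh]

lemma msum_cF (hN : (N:ℝ) ≠ 0) :
    msum z η0 η1 (cF x f) =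
      N * ((1-η1) * prJoint N x f z true + η0 * prJoint N x f z false) := by
  unfold prJoint
  rw [empFreq_eq', empFreq_eq', mul_add, mul_left_comm, mul_left_comm ((N:ℝ)) (η0),
    empFreq'_sumdef hN, empFreq'_sumdef hN]
  unfold msum cF
  rw [Finset.mul_sum, Finset.mul_sum, ← Finset.sum_add_distrib]
  apply Finset.sum_congr rfl
  intro a _
  rw [wgt_true]
  by_cases hf : f (x a) = true <;> cases hz : z a <;> simp [hf, hz]

lemma msum_cO (hN : (N:ℝ) ≠ 0) :
    msum z η0 η1 (cO (N := N)) =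
      N * ((1-η1) * muOf N z true + η0 * muOf N z false) := by
  unfold muOf
  rw [empFreq_eq', empFreq_eq', mul_add, mul_left_comm, mul_left_comm ((N:ℝ)) (η0),
    empFreq'_sumdef hN, empFreq'_sumdef hN]
  unfold msum cO
  rw [Finset.mul_sum, Finset.mul_sum, ← Finset.sum_add_distrib]
  apply Finset.sum_congr rfl
  intro a _
  rw [wgt_true]
  cases hz : z a <;> simp [hz]

lemma Tsum_neg (c : Fin N → ℝ) (zh : Fin N → Bool) : Tsum (fun a => -c a) zh = -Tsum c zh := by
  unfold Tsum; rw [← Finset.sum_neg_distrib]; apply Finset.sum_congr rfl; intros; ring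

lemma msum_neg (c : Fin N → ℝ) : msum z η0 η1 (fun a => -c a) = -msum z η0 η1 c := by
  unfold msum; rw [← Finset.sum_neg_distrib]; apply Finset.sum_congr rfl; intros; ring

lemma prJoint_add (w : Fin N → Bool) :
    prJoint N x f w false + prJoint N x f w true = empFreq' N (fun a => f (x a) = true) := by
  unfold prJoint
  rw [empFreq_eq', empFreq_eq', empFreq'_eq, empFreq'_eq, empFreq'_eq, ← add_div]
  congr 1
  rw [← Finset.sum_add_distrib]
  apply Finset.sum_congr rfl
  intro a _
  by_cases hf : f (x a) = true <;> cases hw : w a <;> simp [hf, hw]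

lemma muOf_add (w : Fin N → Bool) (hN : (N:ℝ) ≠ 0) :
    muOf N w false + muOf N w true = 1 := by
  unfold muOf
  rw [empFreq_eq', empFreq_eq', empFreq'_eq, empFreq'_eq, ← add_div]
  rw [← Finset.sum_add_distrib]
  trans ((∑ _a : Fin N, (1:ℝ)) / N)
  · congr 1
    apply Finset.sum_congr rfl
    intro a _
    cases hw : w a <;> simp [hw]
  · rw [Finset.sum_const, Finset.card_univ, Fintype.card_fin, nsmul_eq_mul, mul_one]
    field_simp

lemma prJoint_le_muOf (i : Bool) :
    prJoint N x f z i ≤ muOf N z i := by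
  unfold prJoint muOf
  rw [empFreq_eq', empFreq_eq']
  exact empFreq'_mono _ _ (fun a h => h.2)

end counting

lemma min_div_max {a b : ℝ} (ha : 0 < a) (hb : 0 < b) :
    min a b / max a b = min (a/b) (b/a) := by
  rcases le_total a b with h | h
  · rw [min_eq_left h, max_eq_right h, min_eq_left]
    rw [div_le_div_iff₀ hb ha]
    nlinarith
  · rw [min_eq_right h, max_eq_left h, min_eq_right]
    rw [div_le_div_iff₀ ha hb]
    nlinarith

lemma determ {X : Type} {N : ℕ} (x : Fin N → X) (z : Fin N → Bool)
    (η0 η1 : ℝ) (hη0 : 0 < η0 ∧ η0 < 1/2) (hη1 : 0 < η1 ∧ η1 < 1/2)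
    (hμ0 : 0 < muOf N z false) (hμ1 : 0 < muOf N z true)
    (f : X → Bool) (ε : ℝ) (hε : 0 < ε ∧ ε < 1/2) (lam : ℝ) (hlam : 0 < lam ∧ lam < 1/2)
    (hmin : lam / 2 ≤ min (prJoint N x f z false) (prJoint N x f z true))
    (hNne : (N:ℝ) ≠ 0)
    (zh : Fin N → Bool)
    (hP : |prJoint N x f zh true -
        ((1-η1) * prJoint N x f z true + η0 * prJoint N x f z false)|
        ≤ ε*(1-η0-η1)*lam/28)
    (hM : |muOf N zh true - ((1-η1) * muOf N z true + η0 * muOf N z false)|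
        ≤ ε*(1-η0-η1)*lam/28) :
    0 < (1 - η1) * muOf N zh false - η1 * muOf N zh true ∧
    0 < (1 - η0) * muOf N zh true - η0 * muOf N zh false ∧
    0 < Gamma0 N x η0 η1 f zh ∧ 0 < Gamma1 N x η0 η1 f zh ∧
    (1 - ε) * gammaSR N x f z ≤ gammaDelta N x η0 η1 f zh ∧
    gammaDelta N x η0 η1 f zh ≤ (1 + ε) * gammaSR N x f z := by
  obtain ⟨hε0, hε2⟩ := hε
  obtain ⟨hl0, hl2⟩ := hlam
  obtain ⟨h00, h02⟩ := hη0
  obtain ⟨h10, h12⟩ := hη1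
  have hApos : 0 < 1 - η0 - η1 := by linarith
  have hsum : prJoint N x f zh false + prJoint N x f zh true
      = prJoint N x f z false + prJoint N x f z true :=
    (prJoint_add x f zh).trans (prJoint_add x f z).symm
  have hμsum : muOf N zh false + muOf N zh true = 1 := muOf_add zh hNne
  have hμzsum : muOf N z false + muOf N z true = 1 := muOf_add z hNne
  have hpm0 : prJoint N x f z false ≤ muOf N z false := prJoint_le_muOf x f z false
  have hpm1 : prJoint N x f z true ≤ muOf N z true := prJoint_le_muOf x f z true
  have hp0 : lam/2 ≤ prJoint N x f z false := le_trans (le_min_iff.mp hmin).1 (le_refl _)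
  have hp1 : lam/2 ≤ prJoint N x f z true := (le_min_iff.mp hmin).2
  unfold Gamma0 Gamma1 gammaDelta gammaSR rate
  set p0 := prJoint N x f z false with hd1
  set p1 := prJoint N x f z true with hd2
  set μ0 := muOf N z false with hd3
  set μ1 := muOf N z true with hd4
  set P0 := prJoint N x f zh false with hd5
  set Pt := prJoint N x f zh true with hd6
  set Mf := muOf N zh false with hd7
  set Mt := muOf N zh true with hd8
  have hp0pos : 0 < p0 := by linarith
  have hp1pos : 0 < p1 := by linarith
  set A := 1 - η0 - η1 with hAdef
  -- deviations
  have e1 : ((1-η1)*P0 - η1*Pt) - A*p0 = ((1-η1)*p1 + η0*p0) - Pt := by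
    linear_combination (1-η1)*hsum
  have e2 : ((1-η0)*Pt - η0*P0) - A*p1 = Pt - ((1-η1)*p1 + η0*p0) := by
    linear_combination (-η0)*hsum
  have e3 : ((1-η1)*Mf - η1*Mt) - A*μ0 = ((1-η1)*μ1 + η0*μ0) - Mt := by
    linear_combination (1-η1)*hμsum - (1-η1)*hμzsum
  have e4 : ((1-η0)*Mt - η0*Mf) - A*μ1 = Mt - ((1-η1)*μ1 + η0*μ0) := by
    linear_combination (-η0)*hμsum + η0*hμzsum
  have hδle : ∀ w : ℝ, lam/2 ≤ w → ε*A*lam/28 ≤ (ε/14)*(A*w) := by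
    intro w hw
    have : A*(lam/2) ≤ A*w := mul_le_mul_of_nonneg_left hw hApos.le
    calc ε*A*lam/28 = (ε/14)*(A*(lam/2)) := by ring
      _ ≤ (ε/14)*(A*w) := mul_le_mul_of_nonneg_left this (by positivity)
  have b1 : |((1-η1)*P0 - η1*Pt) - A*p0| ≤ (ε/14)*(A*p0) := by
    rw [e1, abs_sub_comm]
    exact le_trans hP (hδle p0 hp0)
  have b2 : |((1-η0)*Pt - η0*P0) - A*p1| ≤ (ε/14)*(A*p1) := by
    rw [e2]
    exact le_trans hP (hδle p1 hp1)
  have b3 : |((1-η1)*Mf - η1*Mt) - A*μ0| ≤ (ε/14)*(A*μ0) := by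
    rw [e3, abs_sub_comm]
    exact le_trans hM (hδle μ0 (le_trans hp0 hpm0))
  have b4 : |((1-η0)*Mt - η0*Mf) - A*μ1| ≤ (ε/14)*(A*μ1) := by
    rw [e4]
    exact le_trans hM (hδle μ1 (le_trans hp1 hpm1))
  have H1 := core_ratio ε (ε/14) (A*p0) (A*p1) (A*μ0) (A*μ1)
    ((1-η1)*P0 - η1*Pt) ((1-η0)*Pt - η0*P0) ((1-η1)*Mf - η1*Mt) ((1-η0)*Mt - η0*Mf)
    hε0 hε2 rfl (by positivity) (by positivity) (by positivity) (by positivity)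
    b1 b2 b3 b4
  have H2 := core_ratio ε (ε/14) (A*p1) (A*p0) (A*μ1) (A*μ0)
    ((1-η0)*Pt - η0*P0) ((1-η1)*P0 - η1*Pt) ((1-η0)*Mt - η0*Mf) ((1-η1)*Mf - η1*Mt)
    hε0 hε2 rfl (by positivity) (by positivity) (by positivity) (by positivity)
    b2 b1 b4 b3
  obtain ⟨hn0, hn1, hdn0, hdn1, hlow1, hup1⟩ := H1
  obtain ⟨_, _, _, _, hlow2, hup2⟩ := H2
  have hAne : A ≠ 0 := hApos.ne'
  have hr0 : A*p0/(A*μ0) = p0/μ0 := mul_div_mul_left p0 μ0 hAne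
  have hr1 : A*p1/(A*μ1) = p1/μ1 := mul_div_mul_left p1 μ1 hAne
  rw [hr0, hr1] at hlow1 hup1 hlow2 hup2
  have hrr0 : 0 < p0/μ0 := div_pos hp0pos hμ0
  have hrr1 : 0 < p1/μ1 := div_pos hp1pos hμ1
  rw [min_div_max hrr0 hrr1]
  refine ⟨hdn0, hdn1, div_pos hn0 hdn0, div_pos hn1 hdn1, ?_, ?_⟩
  · refine le_min ?_ ?_
    · refine le_trans ?_ hlow1
      exact mul_le_mul_of_nonneg_left (min_le_left _ _) (by linarith)
    · refine le_trans ?_ hlow2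
      exact mul_le_mul_of_nonneg_left (min_le_right _ _) (by linarith)
  · rcases le_total (p0/μ0/(p1/μ1)) (p1/μ1/(p0/μ0)) with h | h
    · rw [min_eq_left h]
      exact le_trans (min_le_left _ _) hup1
    · rw [min_eq_right h]
      exact le_trans (min_le_right _ _) hup2


end Aux

open Finset Real in
/-- For a fixed classifier `f` with `min_i Pr_D[f=1, Z=i] ≥ λ/2`, with
probability at least `1 − 4·exp(−ε²(1−η0−η1)²λ²N/2400)` the denoised rates are well defined
and positive, and `(1−ε)·γ(f,S) ≤ γ^Δ(f,Ŝ) ≤ (1+ε)·γ(f,S)`. -/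
theorem stmt_3 {X : Type} (N : ℕ) (hN : 1 ≤ N)
    (x : Fin N → X) (z : Fin N → Bool) (y : Fin N → Bool)
    (η0 η1 : ℝ) (hη0 : 0 < η0 ∧ η0 < 1/2) (hη1 : 0 < η1 ∧ η1 < 1/2)
    (hμ0 : 0 < muOf N z false) (hμ1 : 0 < muOf N z true)
    (f : X → Bool)
    (hwd : 0 < max (rate N x f z false) (rate N x f z true))
    (ε : ℝ) (hε : 0 < ε ∧ ε < 1/2) (lam : ℝ) (hlam : 0 < lam ∧ lam < 1/2)
    (hmin : lam / 2 ≤ min (prJoint N x f z false) (prJoint N x f z true)) :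
    1 - 4 * Real.exp (-(ε ^ 2 * (1 - η0 - η1) ^ 2 * lam ^ 2 * N) / 2400) ≤
      noiseProb N z η0 η1 (fun zh =>
        0 < (1 - η1) * muOf N zh false - η1 * muOf N zh true ∧
        0 < (1 - η0) * muOf N zh true - η0 * muOf N zh false ∧
        0 < Gamma0 N x η0 η1 f zh ∧ 0 < Gamma1 N x η0 η1 f zh ∧
        (1 - ε) * gammaSR N x f z ≤ gammaDelta N x η0 η1 f zh ∧
        gammaDelta N x η0 η1 f zh ≤ (1 + ε) * gammaSR N x f z) := by
  have hNpos : (0:ℝ) < N := by exact_mod_cast Nat.lt_of_lt_of_le Nat.zero_lt_one hN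
  have hNne : (N:ℝ) ≠ 0 := hNpos.ne'
  obtain ⟨hε0, hε2⟩ := hε
  obtain ⟨hl0, hl2⟩ := hlam
  obtain ⟨h00, h02⟩ := hη0
  obtain ⟨h10, h12⟩ := hη1
  have hη0le : 0 ≤ η0 := h00.le
  have hη0le1 : η0 ≤ 1 := by linarith
  have hη1le : 0 ≤ η1 := h10.le
  have hη1le1 : η1 ≤ 1 := by linarith
  have hApos : 0 < 1 - η0 - η1 := by linarith
  set δ : ℝ := ε*(1-η0-η1)*lam/28 with hδdef
  have hδpos : 0 < δ := by positivity
  have hδ1 : δ ≤ 1 := by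
    have hA1 : ε*(1-η0-η1) ≤ 1 := by nlinarith
    have hA2 : ε*(1-η0-η1)*lam ≤ 1 := by nlinarith [mul_pos hε0 hApos]
    rw [hδdef]; linarith
  set r : ℝ := δ * N with hrdef
  have hr : 0 < r := by positivity
  have hrN : r ≤ N := by nlinarith
  set E : (Fin N → Bool) → Prop := (fun zh =>
      0 < (1 - η1) * muOf N zh false - η1 * muOf N zh true ∧
      0 < (1 - η0) * muOf N zh true - η0 * muOf N zh false ∧
      0 < Gamma0 N x η0 η1 f zh ∧ 0 < Gamma1 N x η0 η1 f zh ∧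
      (1 - ε) * gammaSR N x f z ≤ gammaDelta N x η0 η1 f zh ∧
      gammaDelta N x η0 η1 f zh ≤ (1 + ε) * gammaSR N x f z) with hEdef
  set G : (Fin N → Bool) → Prop := (fun zh =>
      |Tsum (cF x f) zh - msum z η0 η1 (cF x f)| ≤ r ∧
      |Tsum (cO (N := N)) zh - msum z η0 η1 (cO (N := N))| ≤ r) with hGdef
  -- G implies E
  have hGE : ∀ zh, G zh → E zh := by
    intro zh hG
    obtain ⟨hg1, hg2⟩ := hG
    rw [Tsum_cF x f hNne zh, msum_cF x f z η0 η1 hNne, ← mul_sub, abs_mul,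
      abs_of_pos hNpos] at hg1
    rw [Tsum_cO hNne zh, msum_cO z η0 η1 hNne, ← mul_sub, abs_mul,
      abs_of_pos hNpos] at hg2
    have hP : |prJoint N x f zh true -
        ((1-η1) * prJoint N x f z true + η0 * prJoint N x f z false)| ≤ δ := by
      rw [hrdef, mul_comm δ (N:ℝ)] at hg1
      exact le_of_mul_le_mul_left hg1 hNpos
    have hM : |muOf N zh true - ((1-η1) * muOf N z true + η0 * muOf N z false)| ≤ δ := by
      rw [hrdef, mul_comm δ (N:ℝ)] at hg2
      exact le_of_mul_le_mul_left hg2 hNpos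
    exact determ x z η0 η1 ⟨h00, h02⟩ ⟨h10, h12⟩ hμ0 hμ1 f ε ⟨hε0, hε2⟩ lam ⟨hl0, hl2⟩
      hmin hNne zh hP hM
  have hmonoGE : noiseProbAux N z η0 η1 G ≤ noiseProbAux N z η0 η1 E :=
    noiseProbAux_mono hη0le hη0le1 hη1le hη1le1 hGE
  -- bad event bound
  have tail1 := tail_bound (z := z) hη0le hη0le1 hη1le hη1le1 hN (cF x f) (cF_abs x f) r hr hrN
  have tail2 := tail_bound (z := z) hη0le hη0le1 hη1le hη1le1 hN
    (fun a => -(cF x f a)) (fun a => by rw [abs_neg]; exact cF_abs x f a) r hr hrN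
  have tail3 := tail_bound (z := z) hη0le hη0le1 hη1le hη1le1 hN (cO (N := N)) cO_abs r hr hrN
  have tail4 := tail_bound (z := z) hη0le hη0le1 hη1le hη1le1 hN
    (fun a => -(cO (N := N) a)) (fun a => by rw [abs_neg]; exact cO_abs a) r hr hrN
  have hbad : noiseProbAux N z η0 η1 (fun zh => ¬ G zh) ≤ 4 * Real.exp (-(r^2)/(3*N)) := by
    have hsplit : ∀ zh, ¬ G zh →
        ((r ≤ Tsum (cF x f) zh - msum z η0 η1 (cF x f)) ∨
          ((r ≤ Tsum (fun a => -(cF x f a)) zh - msum z η0 η1 (fun a => -(cF x f a))) ∨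
          ((r ≤ Tsum (cO (N := N)) zh - msum z η0 η1 (cO (N := N))) ∨
            (r ≤ Tsum (fun a => -(cO (N := N) a)) zh -
              msum z η0 η1 (fun a => -(cO (N := N) a)))))) := by
      intro zh hnG
      rw [hGdef, not_and_or] at hnG
      rw [Tsum_neg, Tsum_neg, msum_neg, msum_neg]
      rcases hnG with h | h
      · rw [not_le, lt_abs] at h
        rcases h with h | h
        · exact Or.inl h.le
        · exact Or.inr (Or.inl (by linarith))
      · rw [not_le, lt_abs] at h
        rcases h with h | h
        · exact Or.inr (Or.inr (Or.inl h.le))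
        · exact Or.inr (Or.inr (Or.inr (by linarith)))
    calc noiseProbAux N z η0 η1 (fun zh => ¬ G zh) ≤ _ :=
          noiseProbAux_mono hη0le hη0le1 hη1le hη1le1 hsplit
      _ ≤ _ := noiseProbAux_or_le hη0le hη0le1 hη1le hη1le1 _ _
      _ ≤ _ := by
          apply add_le_add tail1
          calc _ ≤ _ := noiseProbAux_or_le hη0le hη0le1 hη1le hη1le1 _ _
            _ ≤ _ := by
              apply add_le_add tail2
              calc _ ≤ _ := noiseProbAux_or_le hη0le hη0le1 hη1le hη1le1 _ _
                _ ≤ _ := add_le_add tail3 tail4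
      _ = 4 * Real.exp (-(r^2)/(3*N)) := by ring
  have hexp : Real.exp (-(r^2)/(3*N)) ≤
      Real.exp (-(ε ^ 2 * (1 - η0 - η1) ^ 2 * lam ^ 2 * N) / 2400) := by
    apply Real.exp_le_exp.2
    have hkey : r^2/(3*N) = ε ^ 2 * (1 - η0 - η1) ^ 2 * lam ^ 2 * N / 2352 := by
      rw [hrdef, hδdef]
      field_simp
      ring
    have hnn : (0:ℝ) ≤ ε ^ 2 * (1 - η0 - η1) ^ 2 * lam ^ 2 * N := by positivity
    have hkey' : -(r^2)/(3*(N:ℝ)) = -(ε ^ 2 * (1 - η0 - η1) ^ 2 * lam ^ 2 * N)/2352 := by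
      rw [neg_div, neg_div, hkey]
    rw [hkey']
    linarith
  have hcompl := noiseProbAux_add_compl (z := z) (η0 := η0) (η1 := η1) G
  have : noiseProb N z η0 η1 E = noiseProbAux N z η0 η1 E := rfl
  rw [this]
  have h4 : 4 * Real.exp (-(r^2)/(3*N)) ≤
      4 * Real.exp (-(ε ^ 2 * (1 - η0 - η1) ^ 2 * lam ^ 2 * N) / 2400) := by linarith
  calc 1 - 4 * Real.exp (-(ε ^ 2 * (1 - η0 - η1) ^ 2 * lam ^ 2 * N) / 2400)
      ≤ 1 - 4 * Real.exp (-(r^2)/(3*N)) := by linarith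
    _ ≤ 1 - noiseProbAux N z η0 η1 (fun zh => ¬ G zh) := by linarith
    _ = noiseProbAux N z η0 η1 G := by linarith
    _ ≤ noiseProbAux N z η0 η1 E := hmonoGE
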